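/- Let d, q > 0 and r₂, r₃ ≥ 0. Let B be the 2×2 matrix with rows [−d−q+r₂, 2d] and [d+q, −2d+r₃]. Then the spectral bound satisfies s(B) > max{−d−q+r₂, −2d+r₃}. -/
import Mathlib


open Matrix

lemma mem_spec_fin_two (a b c e : ℝ) (μ : ℂ) :
    μ ∈ spectrum ℂ ((!![a, b; c, e]).map Complex.ofReal) ↔
      (μ - a) * (μ - e) - b * c = 0 := by
  rw [spectrum.mem_iff, Matrix.isUnit_iff_isUnit_det, isUnit_iff_ne_zero, not_ne_iff,
    Matrix.det_fin_two]
  simp [Matrix.algebraMap_matrix_apply]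

/-- Spectral bound: maximum real part of the (complex) eigenvalues. -/
noncomputable def specBound {n : ℕ} (M : Matrix (Fin n) (Fin n) ℝ) : ℝ :=
  sSup {t : ℝ | ∃ μ ∈ spectrum ℂ (M.map Complex.ofReal), μ.re = t}

/-- For the limiting matrix `B` of the tributary network,
`s(B) > max{−d−q+r₂, −2d+r₃}`. -/
theorem specBound_B_tributary_gt (d q r₂ r₃ : ℝ) (hd : 0 < d) (hq : 0 < q)
    (hr₂ : 0 ≤ r₂) (hr₃ : 0 ≤ r₃) :
    max (-d - q + r₂) (-2 * d + r₃) <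
      specBound !![-d - q + r₂, 2 * d; d + q, -2 * d + r₃] := by
  set a : ℝ := -d - q + r₂ with ha
  set e : ℝ := -2 * d + r₃ with he
  have hDpos : (0:ℝ) < (a - e) ^ 2 + 4 * (2 * d * (d + q)) := by positivity
  set s : ℝ := Real.sqrt ((a - e) ^ 2 + 4 * (2 * d * (d + q))) with hs
  have hs2 : s ^ 2 = (a - e) ^ 2 + 4 * (2 * d * (d + q)) := Real.sq_sqrt hDpos.le
  have habs : |a - e| < s := by
    rw [← Real.sqrt_sq_eq_abs, hs]
    apply Real.sqrt_lt_sqrt (sq_nonneg _)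
    nlinarith
  set lam : ℝ := ((a + e) + s) / 2 with hlam
  set lam' : ℝ := ((a + e) - s) / 2 with hlam'
  have hsC : (s : ℂ) ^ 2 = ((a : ℂ) - e) ^ 2 + 4 * (2 * d * (d + q)) := by
    exact_mod_cast congrArg Complex.ofReal hs2
  -- `lam` is a (real) eigenvalue
  have hmem : ((lam : ℂ)) ∈ spectrum ℂ ((!![a, 2 * d; d + q, e]).map Complex.ofReal) := by
    rw [mem_spec_fin_two, hlam]
    push_cast
    linear_combination (1/4 : ℂ) * hsC
  -- every eigenvalue has real part ≤ `lam`
  have hbound : ∀ t ∈ {t : ℝ | ∃ μ ∈ spectrum ℂ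
      ((!![a, 2 * d; d + q, e]).map Complex.ofReal), μ.re = t}, t ≤ lam := by
    rintro t ⟨μ, hμ, rfl⟩
    rw [mem_spec_fin_two] at hμ
    push_cast at hμ
    have hfac : (μ - (lam : ℂ)) * (μ - (lam' : ℂ)) = 0 := by
      rw [hlam, hlam']
      push_cast
      linear_combination hμ - (1/4 : ℂ) * hsC
    rcases mul_eq_zero.1 hfac with h | h
    · have hμe : μ = (lam : ℂ) := by linear_combination h
      simp [hμe]
    · have hμe : μ = (lam' : ℂ) := by linear_combination h
      have hle : lam' ≤ lam := by
        have h0 : 0 ≤ s := Real.sqrt_nonneg _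
        rw [hlam, hlam']; linarith
      calc μ.re = lam' := by simp [hμe]
        _ ≤ lam := hle
  have hle : lam ≤ specBound !![a, 2 * d; d + q, e] :=
    le_csSup ⟨lam, hbound⟩ ⟨(lam : ℂ), hmem, by simp⟩
  have hmaxlt : max a e < lam := by
    rcases abs_lt.1 habs with ⟨h1, h2⟩
    rw [max_lt_iff, hlam]
    constructor <;> linarith
  calc max a e < lam := hmaxlt
    _ ≤ _ := hle
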